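/- arXiv:1007.1069 — 6 statements merged into one kernel-verified Lean document; each statement's English description precedes it below -/
import Mathlib

section
/- Let a, b, c, d be real numbers and let M be the 4×4 real matrix with rows (a, b, 0, c), (b, d, c, 0), (0, c, a, −b), (c, 0, −b, d). If M is positive semidefinite, then a·d − c² − b² ≥ 0. -/
theorem stmt_7 (a b c d : ℝ)
    (h : (!![a, b, 0, c; b, d, c, 0; 0, c, a, -b; c, 0, -b, d] :
      Matrix (Fin 4) (Fin 4) ℝ).PosSemidef) :
    0 ≤ a * d - c ^ 2 - b ^ 2 := by
  have key : ∀ t : ℝ, 0 ≤ d * (t * t) + (2 * (b ^ 2 + c ^ 2)) * t + a * (b ^ 2 + c ^ 2) := by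
    intro t
    have := h.dotProduct_mulVec_nonneg ![b, t, c, 0]
    simp [dotProduct, Matrix.mulVec, Fin.sum_univ_four, Matrix.cons_val_zero,
      Matrix.cons_val_one] at this
    nlinarith [this]
  have hd : discrim d (2 * (b ^ 2 + c ^ 2)) (a * (b ^ 2 + c ^ 2)) ≤ 0 := discrim_le_zero key
  have ha0 : 0 ≤ a := by
    have := h.dotProduct_mulVec_nonneg ![(1:ℝ), 0, 0, 0]
    simpa [dotProduct, Matrix.mulVec, Fin.sum_univ_four] using this
  have hd0 : 0 ≤ d := by
    have := h.dotProduct_mulVec_nonneg ![(0:ℝ), 1, 0, 0]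
    simpa [dotProduct, Matrix.mulVec, Fin.sum_univ_four] using this
  rw [discrim] at hd
  nlinarith [mul_nonneg ha0 hd0, sq_nonneg b, sq_nonneg c, sq_nonneg (b^2 + c^2)]
end

section
/- Define f : ℝ⁴ → ℝ⁴ by f(y₁,y₂,y₃,y₄) = (y₁ cos y₂, y₃ sin y₂ + y₁y₄ cos y₂, y₁ sin y₂, y₃ cos y₂ − y₁y₄ sin y₂). Let N' = ({0} × (−π,π] × ℝ × ℝ) ∪ ([0,∞) × {π} × ℝ × ℝ) and N = {x ∈ ℝ⁴ : x₁ ≤ 0 and x₃ = 0}. Then the restriction of f to ([0,∞) × (−π,π] × ℝ × ℝ) ∖ N' is a bijection onto ℝ⁴ ∖ N, with inverse g given by g(x) = ( (x₁²+x₃²)^{1/2}, arg(x₁+i·x₃), (x₂x₃+x₁x₄)/(x₁²+x₃²)^{1/2}, (x₁x₂−x₃x₄)/(x₁²+x₃²) ); that is, g(f(y)) = y for all y in ([0,∞)×(−π,π]×ℝ×ℝ) ∖ N' and f(g(x)) = x for all x ∈ ℝ⁴ ∖ N. -/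
/-- The coordinate transformation `f` from the paper (on ℝ⁴, represented as ℝ×ℝ×ℝ×ℝ). -/
noncomputable def Fmap : ℝ × ℝ × ℝ × ℝ → ℝ × ℝ × ℝ × ℝ := fun y =>
  (y.1 * Real.cos y.2.1,
   y.2.2.1 * Real.sin y.2.1 + y.1 * y.2.2.2 * Real.cos y.2.1,
   y.1 * Real.sin y.2.1,
   y.2.2.1 * Real.cos y.2.1 - y.1 * y.2.2.2 * Real.sin y.2.1)

/-- The inverse transformation `g` from the paper. -/
noncomputable def Gmap : ℝ × ℝ × ℝ × ℝ → ℝ × ℝ × ℝ × ℝ := fun x =>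
  (Real.sqrt (x.1 ^ 2 + x.2.2.1 ^ 2),
   Complex.arg ((x.1 : ℂ) + (x.2.2.1 : ℂ) * Complex.I),
   (x.2.1 * x.2.2.1 + x.1 * x.2.2.2) / Real.sqrt (x.1 ^ 2 + x.2.2.1 ^ 2),
   (x.1 * x.2.1 - x.2.2.1 * x.2.2.2) / (x.1 ^ 2 + x.2.2.1 ^ 2))

/-- The exceptional set `N'` in the domain. -/
def Nprime : Set (ℝ × ℝ × ℝ × ℝ) :=
  (({0} : Set ℝ) ×ˢ (Set.Ioc (-Real.pi) Real.pi ×ˢ ((Set.univ : Set ℝ) ×ˢ (Set.univ : Set ℝ))))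
    ∪ (Set.Ici (0 : ℝ) ×ˢ (({Real.pi} : Set ℝ) ×ˢ ((Set.univ : Set ℝ) ×ˢ (Set.univ : Set ℝ))))

/-- The exceptional set `N = {x : x₁ ≤ 0, x₃ = 0}` in the range. -/
def Nset : Set (ℝ × ℝ × ℝ × ℝ) := {x | x.1 ≤ 0 ∧ x.2.2.1 = 0}

lemma domain_mem {y : ℝ × ℝ × ℝ × ℝ}
    (hy : y ∈ (Set.Ici (0 : ℝ) ×ˢ (Set.Ioc (-Real.pi) Real.pi ×ˢ
        ((Set.univ : Set ℝ) ×ˢ (Set.univ : Set ℝ)))) \ Nprime) :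
    0 < y.1 ∧ -Real.pi < y.2.1 ∧ y.2.1 < Real.pi := by
  obtain ⟨hmem, hN⟩ := hy
  simp only [Set.mem_prod, Set.mem_Ici, Set.mem_Ioc, Set.mem_univ, and_true] at hmem
  obtain ⟨h1, h2⟩ := hmem
  simp only [Nprime, Set.mem_union, Set.mem_prod, Set.mem_singleton_iff, Set.mem_univ,
    Set.mem_Ici, Set.mem_Ioc, and_true, not_or, not_and] at hN
  refine ⟨lt_of_le_of_ne h1 ?_, h2.1, lt_of_le_of_ne h2.2 (hN.2 h1)⟩
  intro h
  exact hN.1 h.symm h2.1 h2.2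

lemma domain_mem' {y : ℝ × ℝ × ℝ × ℝ}
    (h1 : 0 < y.1) (h2 : -Real.pi < y.2.1) (h3 : y.2.1 < Real.pi) :
    y ∈ (Set.Ici (0 : ℝ) ×ˢ (Set.Ioc (-Real.pi) Real.pi ×ˢ
        ((Set.univ : Set ℝ) ×ˢ (Set.univ : Set ℝ)))) \ Nprime := by
  constructor
  · simp only [Set.mem_prod, Set.mem_Ici, Set.mem_Ioc, Set.mem_univ, and_true]
    exact ⟨h1.le, h2, h3.le⟩
  · simp only [Nprime, Set.mem_union, Set.mem_prod, Set.mem_singleton_iff, Set.mem_univ,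
      Set.mem_Ici, Set.mem_Ioc, and_true, not_or, not_and]
    exact ⟨fun h => absurd h h1.ne', fun _ h => h3.ne h⟩

lemma gf_aux {y : ℝ × ℝ × ℝ × ℝ} (h1 : 0 < y.1) (h2 : -Real.pi < y.2.1)
    (h3 : y.2.1 ≤ Real.pi) : Gmap (Fmap y) = y := by
  obtain ⟨r, θ, a, b⟩ := y
  simp only at h1 h2 h3
  have hsc := Real.sin_sq_add_cos_sq θ
  have hsq : (r * Real.cos θ) ^ 2 + (r * Real.sin θ) ^ 2 = r ^ 2 := by nlinarith
  have hr : Real.sqrt ((r * Real.cos θ) ^ 2 + (r * Real.sin θ) ^ 2) = r := by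
    rw [hsq, Real.sqrt_sq h1.le]
  have harg : Complex.arg (((r * Real.cos θ : ℝ) : ℂ) + ((r * Real.sin θ : ℝ) : ℂ) * Complex.I)
      = θ := by
    have he : (((r * Real.cos θ : ℝ) : ℂ) + ((r * Real.sin θ : ℝ) : ℂ) * Complex.I)
        = (r : ℝ) * (Complex.cos θ + Complex.sin θ * Complex.I) := by
      push_cast [Complex.ofReal_cos, Complex.ofReal_sin]
      ring
    rw [he, Complex.arg_real_mul _ h1, Complex.arg_cos_add_sin_mul_I ⟨h2, h3⟩]
  simp only [Fmap, Gmap, Prod.mk.injEq]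
  refine ⟨hr, harg, ?_, ?_⟩
  · rw [hr]
    have : (a * Real.sin θ + r * b * Real.cos θ) * (r * Real.sin θ) +
        r * Real.cos θ * (a * Real.cos θ - r * b * Real.sin θ) = r * a := by linear_combination r * a * hsc
    rw [this, mul_div_assoc, mul_comm]
    field_simp
  · rw [hsq]
    have : r * Real.cos θ * (a * Real.sin θ + r * b * Real.cos θ) -
        r * Real.sin θ * (a * Real.cos θ - r * b * Real.sin θ) = r ^ 2 * b := by linear_combination r ^ 2 * b * hsc
    rw [this, mul_comm, mul_div_assoc]
    field_simp

lemma fg_aux {x : ℝ × ℝ × ℝ × ℝ} (hx : x ∉ Nset) : Fmap (Gmap x) = x := by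
  obtain ⟨p, q, s, t⟩ := x
  simp only [Nset, Set.mem_setOf_eq, not_and_or, not_le] at hx
  have hpos : 0 < p ^ 2 + s ^ 2 := by
    rcases hx with h | h
    · positivity
    · positivity
  set r := Real.sqrt (p ^ 2 + s ^ 2) with hrdef
  have hr : 0 < r := Real.sqrt_pos.mpr hpos
  have hr2 : r ^ 2 = p ^ 2 + s ^ 2 := Real.sq_sqrt hpos.le
  set z : ℂ := (p : ℂ) + (s : ℂ) * Complex.I with hzdef
  have hz : z ≠ 0 := by
    intro h
    have hre : z.re = p := by simp [hzdef]
    have him : z.im = s := by simp [hzdef]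
    rw [h] at hre him
    simp at hre him
    rcases hx with h' | h' <;> simp [← hre, ← him] at h' <;> linarith
  have habs : ‖z‖ = r := by
    rw [Complex.norm_def, Complex.normSq_apply]
    simp [hzdef]
    rw [hrdef]
    ring_nf
  have hcos : Real.cos (Complex.arg z) = p / r := by
    rw [Complex.cos_arg hz, habs]; simp [hzdef]
  have hsin : Real.sin (Complex.arg z) = s / r := by
    rw [Complex.sin_arg, habs]; simp [hzdef]
  simp only [Fmap, Gmap, Prod.mk.injEq, ← hrdef, ← hzdef, hcos, hsin]
  have hrne : r ≠ 0 := hr.ne'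
  rw [← hr2]
  refine ⟨by field_simp, ?_, by field_simp, ?_⟩
  · field_simp
    linear_combination (-q) * hr2
  · field_simp
    linear_combination (-t) * hr2
theorem stmt_9 :
    Set.BijOn Fmap
      ((Set.Ici (0 : ℝ) ×ˢ (Set.Ioc (-Real.pi) Real.pi ×ˢ
          ((Set.univ : Set ℝ) ×ˢ (Set.univ : Set ℝ)))) \ Nprime)
      Nsetᶜ ∧
    (∀ y ∈ (Set.Ici (0 : ℝ) ×ˢ (Set.Ioc (-Real.pi) Real.pi ×ˢ
        ((Set.univ : Set ℝ) ×ˢ (Set.univ : Set ℝ)))) \ Nprime, Gmap (Fmap y) = y) ∧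
    (∀ x : ℝ × ℝ × ℝ × ℝ, x ∉ Nset → Fmap (Gmap x) = x) := by
  have hgf : ∀ y ∈ (Set.Ici (0 : ℝ) ×ˢ (Set.Ioc (-Real.pi) Real.pi ×ˢ
      ((Set.univ : Set ℝ) ×ˢ (Set.univ : Set ℝ)))) \ Nprime, Gmap (Fmap y) = y := by
    intro y hy
    obtain ⟨h1, h2, h3⟩ := domain_mem hy
    exact gf_aux h1 h2 h3.le
  have hmaps : ∀ y ∈ (Set.Ici (0 : ℝ) ×ˢ (Set.Ioc (-Real.pi) Real.pi ×ˢ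
      ((Set.univ : Set ℝ) ×ˢ (Set.univ : Set ℝ)))) \ Nprime, Fmap y ∈ Nsetᶜ := by
    intro y hy
    obtain ⟨h1, h2, h3⟩ := domain_mem hy
    simp only [Set.mem_compl_iff, Nset, Set.mem_setOf_eq, not_and, not_le, Fmap]
    intro hle hs0
    have hs : Real.sin y.2.1 = 0 := by
      rcases mul_eq_zero.mp hs0 with h | h
      · exact absurd h h1.ne'
      · exact h
    have hz : y.2.1 = 0 := by
      rwa [Real.sin_eq_zero_iff_of_lt_of_lt h2 h3] at hs
    rw [hz, Real.cos_zero, mul_one] at hle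
    exact absurd hle (not_le.mpr h1)
  have hginv : ∀ x ∈ Nsetᶜ, Gmap x ∈ (Set.Ici (0 : ℝ) ×ˢ (Set.Ioc (-Real.pi) Real.pi ×ˢ
      ((Set.univ : Set ℝ) ×ˢ (Set.univ : Set ℝ)))) \ Nprime := by
    intro x hx
    simp only [Set.mem_compl_iff, Nset, Set.mem_setOf_eq, not_and_or, not_le] at hx
    have hpos : 0 < x.1 ^ 2 + x.2.2.1 ^ 2 := by
      rcases hx with h | h
      · positivity
      · positivity
    set z : ℂ := (x.1 : ℂ) + (x.2.2.1 : ℂ) * Complex.I with hzdef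
    have e1 : (Gmap x).1 = Real.sqrt (x.1 ^ 2 + x.2.2.1 ^ 2) := rfl
    have e2 : (Gmap x).2.1 = Complex.arg z := rfl
    apply domain_mem'
    · rw [e1]; exact Real.sqrt_pos.mpr hpos
    · rw [e2]; exact Complex.neg_pi_lt_arg z
    · rw [e2]
      refine lt_of_le_of_ne (Complex.arg_le_pi z) ?_
      intro h
      rw [Complex.arg_eq_pi_iff] at h
      obtain ⟨hre, him⟩ := h
      simp only [hzdef, Complex.add_re, Complex.ofReal_re, Complex.mul_re, Complex.I_re,
        Complex.I_im, Complex.ofReal_im, Complex.add_im, Complex.mul_im] at hre him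
      rcases hx with h' | h' <;> [linarith; exact h' (by linarith)]
  refine ⟨⟨fun y hy => hmaps y hy, ?_, ?_⟩, hgf, fun x hx => fg_aux hx⟩
  · intro a ha b hb hab
    rw [← hgf a ha, ← hgf b hb, hab]
  · intro x hx
    exact ⟨Gmap x, hginv x hx, fg_aux (by simpa using hx)⟩
end

section
/- Let a, b, c, d be real numbers with a > 0 and D := a·d − c² − b² > 0. Then for every z₄ ∈ ℝ, ∫₀^∞ ∫_{−π}^{π} ∫_{−∞}^{∞} (2π)^{−2} D^{−1} · z₁² · exp( −(2D)^{−1}·( z₁²·(d + a·z₄² − 2b·z₄) + a·z₃² − 2c·z₁·z₃ ) ) dz₃ dz₂ dz₁ = (a/2)·D·( (a·z₄ − b)² + D )^{−3/2}. -/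
open MeasureTheory

open Real Set in
theorem stmt_11 (a b c d : ℝ) (ha : 0 < a) (hD : 0 < a * d - c ^ 2 - b ^ 2) (z₄ : ℝ) :
    (∫ z₁ in Set.Ici (0 : ℝ), ∫ z₂ in Set.Ioc (-Real.pi) Real.pi, ∫ z₃ : ℝ,
        ((2 * Real.pi) ^ 2)⁻¹ * (a * d - c ^ 2 - b ^ 2)⁻¹ * z₁ ^ 2 *
          Real.exp (-(2 * (a * d - c ^ 2 - b ^ 2))⁻¹ *
            (z₁ ^ 2 * (d + a * z₄ ^ 2 - 2 * b * z₄) + a * z₃ ^ 2 - 2 * c * z₁ * z₃)))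
      = a / 2 * (a * d - c ^ 2 - b ^ 2) *
          ((a * z₄ - b) ^ 2 + (a * d - c ^ 2 - b ^ 2)) ^ (-(3 : ℝ) / 2) := by
  set D := a * d - c ^ 2 - b ^ 2 with hDdef
  have hDpos : 0 < D := hD
  set E := (a * z₄ - b) ^ 2 + D with hEdef
  have hEpos : 0 < E := by positivity
  have ha' : a ≠ 0 := ne_of_gt ha
  have hD' : D ≠ 0 := ne_of_gt hDpos
  set p : ℝ := a / (2 * D) with hpdef
  have hp : 0 < p := by positivity
  set α : ℝ := E / (2 * a * D) with hadef
  have hα : 0 < α := by positivity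
  have hinner : ∀ z₁ : ℝ,
      (∫ z₃ : ℝ, ((2 * π) ^ 2)⁻¹ * D⁻¹ * z₁ ^ 2 *
        Real.exp (-(2 * D)⁻¹ *
          (z₁ ^ 2 * (d + a * z₄ ^ 2 - 2 * b * z₄) + a * z₃ ^ 2 - 2 * c * z₁ * z₃)))
      = ((2 * π) ^ 2)⁻¹ * D⁻¹ * z₁ ^ 2 * Real.exp (-α * z₁ ^ 2) * Real.sqrt (π / p) := by
    intro z₁
    have key : ∀ z₃ : ℝ,
        ((2*π)^2)⁻¹ * D⁻¹ * z₁^2 *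
          Real.exp (-(2*D)⁻¹ * (z₁^2*(d + a*z₄^2 - 2*b*z₄) + a*z₃^2 - 2*c*z₁*z₃))
        = (((2*π)^2)⁻¹ * D⁻¹ * z₁^2 * Real.exp (-α * z₁^2)) *
            Real.exp (-p * (z₃ - c*z₁/a)^2) := by
      intro z₃
      rw [mul_assoc (((2*π)^2)⁻¹ * D⁻¹ * z₁^2), ← Real.exp_add]
      congr 2
      rw [hadef, hpdef, hEdef]
      field_simp
      ring
    simp_rw [key]
    rw [integral_const_mul,
      show (∫ z₃ : ℝ, Real.exp (-p*(z₃ - c*z₁/a)^2)) = ∫ z₃ : ℝ, Real.exp (-p*z₃^2) from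
        integral_sub_right_eq_self (fun x => Real.exp (-p*x^2)) (c*z₁/a),
      integral_gaussian]
  simp_rw [hinner]
  have hmid : ∀ z₁ : ℝ,
      (∫ _ in Set.Ioc (-π) π,
        ((2*π)^2)⁻¹ * D⁻¹ * z₁^2 * Real.exp (-α * z₁^2) * Real.sqrt (π / p))
      = (2*π) * (((2*π)^2)⁻¹ * D⁻¹ * z₁^2 * Real.exp (-α * z₁^2) * Real.sqrt (π / p)) := by
    intro z₁
    rw [setIntegral_const, measureReal_def, Real.volume_Ioc,
      ENNReal.toReal_ofReal (by linarith [pi_pos] : (0:ℝ) ≤ π - -π), smul_eq_mul]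
    ring_nf
  simp_rw [hmid]
  have h2 : ∀ x : ℝ, x ^ (2:ℝ) = x ^ 2 := fun x => by
    rw [show (2:ℝ) = ((2:ℕ):ℝ) by norm_num, Real.rpow_natCast]
  have houter : (∫ x in Ioi (0:ℝ), x ^ (2:ℝ) * Real.exp (-α * x ^ (2:ℝ)))
      = α ^ (-(3:ℝ)/2) * (1/2) * Real.Gamma (3/2) := by
    have := integral_rpow_mul_exp_neg_mul_rpow (p := 2) (q := 2) (b := α)
      (by norm_num) (by norm_num) hα
    rw [this]
    norm_num
  have hGamma : Real.Gamma (3/2) = √π / 2 := by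
    rw [show (3/2:ℝ) = 1/2 + 1 by norm_num, Real.Gamma_add_one (by norm_num),
      Real.Gamma_one_half_eq]
    ring
  have h2aD : (0:ℝ) < 2*a*D := by positivity
  have hαr : α ^ (-(3:ℝ)/2) = E ^ (-(3:ℝ)/2) * ((2*a*D) * √(2*a*D)) := by
    have h32 : (2*a*D) ^ ((3:ℝ)/2) = (2*a*D) * √(2*a*D) := by
      rw [show ((3:ℝ)/2) = 1 + 1/2 by norm_num, Real.rpow_add h2aD, Real.rpow_one,
        Real.sqrt_eq_rpow]
    rw [hadef, show (-(3:ℝ)/2) = -((3:ℝ)/2) by norm_num,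
      Real.rpow_neg (by positivity), Real.div_rpow hEpos.le h2aD.le, inv_div,
      div_eq_mul_inv, ← Real.rpow_neg hEpos.le, h32, mul_comm]
  have hsq : √(π/p) * √(2*a*D) * √π = 2*π*D := by
    rw [← Real.sqrt_mul (by positivity), ← Real.sqrt_mul (by positivity),
      show π/p * (2*a*D) * π = (2*π*D)^2 by rw [hpdef]; field_simp]
    exact Real.sqrt_sq (by positivity)
  calc (∫ z₁ in Set.Ici (0:ℝ),
        (2*π) * (((2*π)^2)⁻¹ * D⁻¹ * z₁^2 * Real.exp (-α * z₁^2) * Real.sqrt (π / p)))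
      = ((2*π) * ((2*π)^2)⁻¹ * D⁻¹ * Real.sqrt (π / p)) *
          ∫ x in Ioi (0:ℝ), x ^ (2:ℝ) * Real.exp (-α * x ^ (2:ℝ)) := by
        rw [integral_Ici_eq_integral_Ioi, ← integral_const_mul]
        refine setIntegral_congr_fun measurableSet_Ioi (fun x _ => ?_)
        rw [h2 x]
        ring
    _ = 2 * π * ((2 * π) ^ 2)⁻¹ * D⁻¹ * √(π/p) *
          (E ^ (-(3:ℝ)/2) * ((2*a*D) * √(2*a*D)) * (1/2) * (√π/2)) := by
        rw [houter, hGamma, hαr]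
    _ = 2 * π * ((2 * π) ^ 2)⁻¹ * D⁻¹ * (E ^ (-(3:ℝ)/2)) * (1/4) * (2*a*D) *
          (√(π/p) * √(2*a*D) * √π) := by ring
    _ = 2 * π * ((2 * π) ^ 2)⁻¹ * D⁻¹ * (E ^ (-(3:ℝ)/2)) * (1/4) * (2*a*D) * (2*π*D) := by
        rw [hsq]
    _ = a / 2 * D * E ^ (-(3:ℝ)/2) := by field_simp; ring
end

section
/- Let a, b be real numbers with a > 0 and let D > 0. Define p(y) = (a/2)·D·( (a·y − b)² + D )^{−3/2} for y ∈ ℝ. Then ∫_ℝ (y − b/a)²·p(y) dy = +∞; that is, a random variable with density p has infinite variance. -/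
open MeasureTheory

/-- The density `p(y) = (a/2)·D·((a·y − b)² + D)^{−3/2}`. -/
noncomputable def pdfIF (a b D y : ℝ) : ℝ :=
  a / 2 * D * ((a * y - b) ^ 2 + D) ^ (-(3 : ℝ) / 2)

theorem stmt_13 (a b D : ℝ) (ha : 0 < a) (hD : 0 < D) :
    (∫⁻ y : ℝ, ENNReal.ofReal ((y - b / a) ^ 2 * pdfIF a b D y)) = ⊤ := by
  set f : ℝ → ℝ := fun y => (y - b / a) ^ 2 * pdfIF a b D y with hf
  set c : ℝ := b / a with hc
  set M : ℝ := max 1 (max (2 * |c|) (Real.sqrt D / a)) with hM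
  have hM1 : (1 : ℝ) ≤ M := le_max_left _ _
  have hM0 : (0 : ℝ) < M := lt_of_lt_of_le one_pos hM1
  set K : ℝ := D / (8 * 5 ^ ((3 : ℝ) / 2) * a ^ 2) with hK
  have h5 : (0 : ℝ) < 5 ^ ((3 : ℝ) / 2) := Real.rpow_pos_of_pos (by norm_num) _
  have hK0 : 0 < K := by
    apply div_pos hD
    positivity
  -- pointwise nonnegativity
  have hfpos : ∀ y, 0 ≤ f y := by
    intro y
    have : (0:ℝ) ≤ ((a * y - b) ^ 2 + D) ^ (-(3 : ℝ) / 2) :=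
      Real.rpow_nonneg (by positivity) _
    simp only [hf, pdfIF]
    positivity
  -- measurability
  have hfm : Measurable f := by
    simp only [hf, pdfIF]
    fun_prop
  -- key lower bound on Ioi M
  have hbound : ∀ y ∈ Set.Ioi M, K * y ^ (-1 : ℝ) ≤ f y := by
    intro y hy
    simp only [Set.mem_Ioi] at hy
    have hy0 : (0:ℝ) < y := lt_trans hM0 hy
    have hyc : 2 * |c| ≤ y := le_trans (le_trans (le_max_left _ _) (le_max_right _ _)) hy.le
    have hsq : Real.sqrt D / a ≤ y := le_trans (le_trans (le_max_right _ _) (le_max_right _ _)) hy.le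
    have hch : |c| ≤ y / 2 := by linarith
    have habs := abs_le.1 hch
    have hyc1 : y / 2 ≤ y - c := by linarith [habs.2]
    have hyc2 : y - c ≤ 2 * y := by linarith [habs.1]
    have hDy : D ≤ a ^ 2 * y ^ 2 := by
      have h1 : Real.sqrt D ≤ a * y := by
        rw [div_le_iff₀ ha] at hsq; linarith [hsq]
      have h2 : Real.sqrt D ^ 2 ≤ (a * y) ^ 2 := by
        apply pow_le_pow_left₀ (Real.sqrt_nonneg _) h1
      rw [Real.sq_sqrt hD.le] at h2
      nlinarith
    have hab : a * y - b = a * (y - c) := by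
      field_simp [hc]
      rw [hc]; field_simp
    have hden : (a * y - b) ^ 2 + D ≤ 5 * a ^ 2 * y ^ 2 := by
      rw [hab]
      have h1 : (a * (y - c)) ^ 2 ≤ a ^ 2 * (2 * y) ^ 2 := by
        have : (y - c) ^ 2 ≤ (2 * y) ^ 2 := by
          apply sq_le_sq'
          · nlinarith
          · exact hyc2
        nlinarith [sq_nonneg a]
      nlinarith
    have hden0 : (0:ℝ) < (a * y - b) ^ 2 + D := by positivity
    have hrpow : (5 * a ^ 2 * y ^ 2) ^ (-(3 : ℝ) / 2) ≤ ((a * y - b) ^ 2 + D) ^ (-(3 : ℝ) / 2) :=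
      Real.rpow_le_rpow_of_nonpos hden0 hden (by norm_num)
    have hval : (5 * a ^ 2 * y ^ 2) ^ (-(3 : ℝ) / 2)
        = (5 ^ ((3:ℝ)/2) * a ^ 3 * y ^ 3)⁻¹ := by
      rw [show (-(3:ℝ)/2) = -((3:ℝ)/2) by ring, Real.rpow_neg (by positivity),
        Real.mul_rpow (by positivity) (by positivity),
        Real.mul_rpow (by norm_num) (by positivity)]
      congr 2
      · rw [← Real.rpow_natCast a 2, ← Real.rpow_mul ha.le, ← Real.rpow_natCast a 3]
        norm_num
      · rw [← Real.rpow_natCast y 2, ← Real.rpow_mul hy0.le, ← Real.rpow_natCast y 3]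
        norm_num
    -- now compute
    have hinv : K * y ^ (-1:ℝ) = K * y⁻¹ := by rw [Real.rpow_neg_one]
    have hstep : K * y⁻¹ = (y / 2) ^ 2 * (a / 2 * D * (5 ^ ((3:ℝ)/2) * a ^ 3 * y ^ 3)⁻¹) := by
      rw [hK]
      field_simp
      ring
    calc K * y ^ (-1:ℝ) = K * y⁻¹ := hinv
      _ = (y / 2) ^ 2 * (a / 2 * D * (5 ^ ((3:ℝ)/2) * a ^ 3 * y ^ 3)⁻¹) := hstep
      _ ≤ (y - c) ^ 2 * (a / 2 * D * (5 ^ ((3:ℝ)/2) * a ^ 3 * y ^ 3)⁻¹) := by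
          apply mul_le_mul_of_nonneg_right _ (by positivity)
          apply sq_le_sq' (by linarith) hyc1
          -- need (y/2)^2 ≤ (y-c)^2 : use pow_le_pow_left
      _ ≤ (y - c) ^ 2 * (a / 2 * D * ((a * y - b) ^ 2 + D) ^ (-(3 : ℝ) / 2)) := by
          apply mul_le_mul_of_nonneg_left _ (sq_nonneg _)
          rw [← hval]
          exact mul_le_mul_of_nonneg_left hrpow (by positivity)
      _ = f y := by simp [hf, pdfIF, hc]
  -- contradiction setup
  by_contra h
  have hlt : (∫⁻ y : ℝ, ENNReal.ofReal (f y)) < ⊤ := lt_top_iff_ne_top.2 h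
  have hint : Integrable f := by
    refine ⟨hfm.aestronglyMeasurable, ?_⟩
    rw [hasFiniteIntegral_iff_ofReal (Filter.Eventually.of_forall hfpos)]
    exact hlt
  have hIon : IntegrableOn f (Set.Ioi M) := hint.integrableOn
  have h2 : IntegrableOn (fun y => K * y ^ (-1:ℝ)) (Set.Ioi M) := by
    refine Integrable.mono hIon ?_ ?_
    · refine (Measurable.aestronglyMeasurable ?_)
      fun_prop
    · filter_upwards [ae_restrict_mem measurableSet_Ioi] with y hy
      have hy0 : (0:ℝ) < y := lt_trans hM0 (Set.mem_Ioi.1 hy)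
      rw [Real.norm_of_nonneg (by positivity), Real.norm_of_nonneg (hfpos y)]
      exact hbound y hy
  have h3 : IntegrableOn (fun y => y ^ (-1:ℝ)) (Set.Ioi M) := by
    have := h2.const_mul K⁻¹
    simp [mul_assoc, inv_mul_cancel_left₀ hK0.ne'] at this; exact this
  rw [integrableOn_Ioi_rpow_iff hM0] at h3
  norm_num at h3
end

section
/- Let (Ω, 𝓑, ℙ) be a probability space and X = (X₁, X₂, X₃, X₄) : Ω → ℝ⁴ a measurable map whose characteristic function satisfies E[exp(i·uᵀX)] = exp(−(1/2)·uᵀ M u) for all u ∈ ℝ⁴, where M is the 4×4 real matrix with rows (a, b, 0, c), (b, d, c, 0), (0, c, a, −b), (c, 0, −b, d). Suppose a·d − c² − b² = 0 and a > 0. Then almost surely X₁² + X₃² > 0 and (X₁X₂ − X₃X₄)/(X₁² + X₃²) = b/a. -/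
open MeasureTheory Complex Real

lemma aux_int {Ω : Type*} [MeasurableSpace Ω] (ℙ : Measure Ω) [IsProbabilityMeasure ℙ]
    (g : Ω → ℝ) (hg : Measurable g) :
    Integrable (fun ω => Complex.exp (Complex.I * (g ω : ℂ))) ℙ := by
  refine (integrable_const (1:ℝ)).mono' ?_ (Filter.Eventually.of_forall fun ω => ?_)
  · exact (Complex.measurable_exp.comp ((measurable_const.mul (Complex.measurable_ofReal.comp hg)))).aestronglyMeasurable
  · simp [Complex.norm_exp]

lemma aux_cos {Ω : Type*} [MeasurableSpace Ω] (ℙ : Measure Ω) [IsProbabilityMeasure ℙ]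
    (g : Ω → ℝ) (hg : Measurable g)
    (h : ∫ ω, Complex.exp (Complex.I * (g ω : ℂ)) ∂ℙ = 1) :
    ∀ᵐ ω ∂ℙ, Real.cos (g ω) = 1 := by
  have hint := aux_int ℙ g hg
  have hre : ∫ ω, Real.cos (g ω) ∂ℙ = 1 := by
    have h2 := integral_re hint
    simp only [RCLike.re_to_complex] at h2
    rw [h] at h2
    simp only [Complex.exp_re, Complex.one_re, Complex.mul_re, Complex.I_re, Complex.ofReal_re,
      Complex.I_im, Complex.ofReal_im, Complex.mul_im] at h2
    simpa using h2
  have hcosint : Integrable (fun ω => Real.cos (g ω)) ℙ := by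
    refine (integrable_const (1:ℝ)).mono' ?_ (Filter.Eventually.of_forall fun ω => ?_)
    · exact (Real.measurable_cos.comp hg).aestronglyMeasurable
    · simp [Real.abs_cos_le_one]
  have h0 : ∫ ω, (1 - Real.cos (g ω)) ∂ℙ = 0 := by
    rw [integral_sub (integrable_const 1) hcosint]
    simp [hre]
  have := (integral_eq_zero_iff_of_nonneg
    (fun ω => by simpa using Real.cos_le_one (g ω))
    ((integrable_const 1).sub hcosint)).mp h0
  filter_upwards [this] with ω hω
  have : 1 - Real.cos (g ω) = 0 := hω
  linarith

lemma aux_zero {Ω : Type*} [MeasurableSpace Ω] (ℙ : Measure Ω) [IsProbabilityMeasure ℙ]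
    (g : Ω → ℝ) (hg : Measurable g)
    (h : ∀ t : ℝ, ∫ ω, Complex.exp (Complex.I * ((t * g ω : ℝ) : ℂ)) ∂ℙ = 1) :
    ∀ᵐ ω ∂ℙ, g ω = 0 := by
  have h1 : ∀ᵐ ω ∂ℙ, Real.cos (g ω) = 1 := by
    have := aux_cos ℙ g hg ?_
    · exact this
    · simpa using h 1
  have h2 : ∀ᵐ ω ∂ℙ, Real.cos (Real.pi * g ω) = 1 := by
    refine aux_cos ℙ (fun ω => Real.pi * g ω) (measurable_const.mul hg) ?_
    simpa using h Real.pi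
  filter_upwards [h1, h2] with ω hc1 hc2
  obtain ⟨k, hk⟩ := (Real.cos_eq_one_iff _).mp hc1
  obtain ⟨m, hm⟩ := (Real.cos_eq_one_iff _).mp hc2
  rcases eq_or_ne k 0 with hk0 | hk0
  · rw [hk0] at hk; simpa using hk.symm
  · exfalso
    apply irrational_pi
    refine ⟨(m : ℚ)/(k : ℚ), ?_⟩
    have hπ : Real.pi > 0 := Real.pi_pos
    have hkR : (k:ℝ) ≠ 0 := Int.cast_ne_zero.mpr hk0
    -- π * g = π * k * 2π ; also = m * 2π  ⇒ m = π k ⇒ π = m / k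
    push_cast
    rw [div_eq_iff hkR]
    have : (m:ℝ) * (2 * Real.pi) = Real.pi * ((k:ℝ) * (2 * Real.pi)) := by
      rw [hk, hm]
    nlinarith [this]


lemma aux_atom {Ω : Type*} [MeasurableSpace Ω] (ℙ : Measure Ω) [IsProbabilityMeasure ℙ]
    (g : Ω → ℝ) (hg : Measurable g) (a : ℝ) (ha : 0 < a)
    (h : ∀ t : ℝ, ∫ ω, Complex.exp (Complex.I * ((t * g ω : ℝ) : ℂ)) ∂ℙ
        = Complex.exp (((-(a/2) * t^2 : ℝ)) : ℂ)) :
    ∀ᵐ ω ∂ℙ, g ω ≠ 0 := by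
  -- the key quantitative bound
  have key : ∀ β : ℝ, 0 < β →
      ∫ ω, Real.exp (-(g ω)^2/(4*β)) ∂ℙ = Real.sqrt (Real.pi/(β+a/2)) / Real.sqrt (Real.pi/β) := by
    intro β hβ
    set G : ℝ → Ω → ℂ := fun t ω => Complex.exp (I * (g ω : ℂ) * t) * Complex.exp (-(β:ℂ) * (t:ℂ)^2) with hG
    have hmeas : AEStronglyMeasurable (Function.uncurry G) ((volume : Measure ℝ).prod ℙ) := by
      apply Measurable.aestronglyMeasurable
      apply Measurable.mul
      · exact Complex.measurable_exp.comp
          ((measurable_const.mul ((Complex.measurable_ofReal.comp (hg.comp measurable_snd)))).mul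
            (Complex.measurable_ofReal.comp measurable_fst))
      · exact Complex.measurable_exp.comp
          (measurable_const.mul ((Complex.measurable_ofReal.comp measurable_fst).pow measurable_const))
    have hnormG : ∀ t ω, ‖G t ω‖ = Real.exp (-β * t^2) := by
      intro t ω
      simp only [hG, norm_mul, Complex.norm_exp]
      have h1 : (I * (g ω : ℂ) * t).re = 0 := by simp
      have h2 : (-(β:ℂ) * (t:ℂ)^2).re = -β * t^2 := by
        rw [show -(β:ℂ) * (t:ℂ)^2 = ((-β * t^2 : ℝ) : ℂ) by push_cast; ring, Complex.ofReal_re]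
      rw [h1, h2, Real.exp_zero, one_mul]
    have hsec : ∀ t : ℝ, Integrable (G t) ℙ := by
      intro t
      refine (integrable_const (Real.exp (-β * t^2))).mono'
        ((Complex.measurable_exp.comp
            ((measurable_const.mul (Complex.measurable_ofReal.comp hg)).mul
              measurable_const)).mul measurable_const).aestronglyMeasurable
        (Filter.Eventually.of_forall fun ω => le_of_eq (hnormG t ω))
    have hint : Integrable (Function.uncurry G) ((volume : Measure ℝ).prod ℙ) := by
      rw [integrable_prod_iff hmeas]
      constructor
      · exact Filter.Eventually.of_forall fun t => hsec t
      · refine (integrable_exp_neg_mul_sq hβ).congr ?_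
        refine Filter.Eventually.of_forall fun t => ?_
        simp only [Function.uncurry]
        rw [show (fun ω => ‖G t ω‖) = fun _ : Ω => Real.exp (-β * t^2) from funext (hnormG t)]
        simp
    have hswap := integral_integral_swap hint
    -- compute LHS: ∫ t, ∫ ω, G t ω
    have hLHS : (∫ t : ℝ, ∫ ω, G t ω ∂ℙ) = (↑Real.pi / ((β:ℂ)+a/2)) ^ (1/2 : ℂ) := by
      have hsect : ∀ t : ℝ, (∫ ω, G t ω ∂ℙ) = Complex.exp (-((β:ℂ)+a/2) * (t:ℂ)^2) := by
        intro t
        simp only [hG]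
        rw [integral_mul_const]
        have : (∫ ω, Complex.exp (I * (g ω : ℂ) * t) ∂ℙ)
            = Complex.exp (((-(a/2) * t^2 : ℝ)) : ℂ) := by
          rw [← h t]
          apply integral_congr_ae
          refine Filter.Eventually.of_forall fun ω => ?_
          push_cast
          ring_nf
        rw [this, ← Complex.exp_add]
        congr 1
        push_cast
        ring
      rw [integral_congr_ae (Filter.Eventually.of_forall hsect)]
      exact integral_gaussian_complex (by simp [hβ.le]; positivity)
    -- compute RHS: ∫ ω, ∫ t, G t ω
    have hfour : ∀ ω, (∫ t : ℝ, G t ω) =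
        (↑Real.pi / (β:ℂ)) ^ (1/2 : ℂ) * Complex.exp (-(g ω:ℂ)^2 / (4*(β:ℂ))) := by
      intro ω
      simp only [hG]
      exact fourierIntegral_gaussian (b := (β:ℂ)) (by simpa using hβ) ((g ω : ℂ))
    have hexpR : ∀ ω, Complex.exp (-(g ω:ℂ)^2 / (4*(β:ℂ)))
        = ((Real.exp (-(g ω)^2/(4*β)) : ℝ) : ℂ) := by
      intro ω
      rw [show -(g ω:ℂ)^2 / (4*(β:ℂ)) = ((-(g ω)^2/(4*β) : ℝ) : ℂ) by push_cast; ring,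
        ← Complex.ofReal_exp]
    have hRHS : (∫ ω, ∫ t : ℝ, G t ω ∂volume ∂ℙ)
        = (↑Real.pi / (β:ℂ)) ^ (1/2 : ℂ) * ((∫ ω, Real.exp (-(g ω)^2/(4*β)) ∂ℙ : ℝ) : ℂ) := by
      rw [integral_congr_ae (Filter.Eventually.of_forall fun ω => (hfour ω).trans (by rw [hexpR ω]))]
      rw [integral_const_mul]
      congr 1
      exact integral_ofReal
    rw [hLHS, hRHS] at hswap
    -- convert to a real equation
    have hr1 : (0:ℝ) ≤ Real.pi/(β+a/2) := by positivity
    have hr2 : (0:ℝ) ≤ Real.pi/β := by positivity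
    have hc1 : (↑Real.pi / ((β:ℂ)+a/2)) ^ (1/2 : ℂ) = (((Real.pi/(β+a/2)) ^ (1/2:ℝ) : ℝ) : ℂ) := by
      rw [Complex.ofReal_cpow hr1]
      push_cast
      norm_num
    have hc2 : (↑Real.pi / (β:ℂ)) ^ (1/2 : ℂ) = (((Real.pi/β) ^ (1/2:ℝ) : ℝ) : ℂ) := by
      rw [Complex.ofReal_cpow hr2]
      push_cast
      norm_num
    rw [hc1, hc2] at hswap
    have hreal : (Real.pi/(β+a/2)) ^ (1/2:ℝ)
        = (Real.pi/β) ^ (1/2:ℝ) * ∫ ω, Real.exp (-(g ω)^2/(4*β)) ∂ℙ := by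
      exact_mod_cast hswap
    rw [← Real.sqrt_eq_rpow, ← Real.sqrt_eq_rpow] at hreal
    rw [eq_div_iff (ne_of_gt (Real.sqrt_pos.mpr (by positivity)))]
    linarith [hreal]
  -- bound the integral
  have hbound : ∀ β : ℝ, 0 < β →
      (∫ ω, Real.exp (-(g ω)^2/(4*β)) ∂ℙ) ≤ Real.sqrt (2*β/a) := by
    intro β hβ
    rw [key β hβ, div_le_iff₀ (Real.sqrt_pos.mpr (by positivity)), ← Real.sqrt_mul (by positivity)]
    apply Real.sqrt_le_sqrt
    rw [show (2*β/a)*(Real.pi/β) = 2*Real.pi/a by field_simp]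
    have h1 : Real.pi/(β+a/2) ≤ Real.pi/(a/2) := by
      gcongr <;> linarith [Real.pi_pos]
    have h2 : Real.pi/(a/2) = 2*Real.pi/a := by field_simp
    linarith
  -- the atom has measure zero
  set s : Set Ω := {ω | g ω = 0} with hs_def
  have hs : MeasurableSet s := hg (measurableSet_singleton 0)
  have hexpint : ∀ β : ℝ, 0 < β → Integrable (fun ω => Real.exp (-(g ω)^2/(4*β))) ℙ := by
    intro β hβ
    refine (integrable_const (1:ℝ)).mono'
      ((Real.measurable_exp.comp (((hg.pow_const 2).neg).div_const _)).aestronglyMeasurable)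
      (Filter.Eventually.of_forall fun ω => ?_)
    rw [Real.norm_eq_abs, abs_of_pos (Real.exp_pos _)]
    exact Real.exp_le_one_iff.mpr
      (div_nonpos_of_nonpos_of_nonneg (by nlinarith [sq_nonneg (g ω)]) (by positivity))
  have hPle : ∀ β : ℝ, 0 < β → (ℙ s).toReal ≤ Real.sqrt (2*β/a) := by
    intro β hβ
    refine le_trans ?_ (hbound β hβ)
    rw [← Measure.real_def, ← integral_indicator_one hs]
    apply integral_mono ((integrable_const (1:ℝ)).indicator hs) (hexpint β hβ)
    intro ω
    by_cases hω : ω ∈ s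
    · rw [Set.indicator_of_mem hω]
      have : g ω = 0 := hω
      simp [this]
    · rw [Set.indicator_of_notMem hω]
      positivity
  have hP0 : ℙ s = 0 := by
    by_contra hne
    have hp : 0 < (ℙ s).toReal := ENNReal.toReal_pos hne (measure_ne_top ℙ s)
    set p := (ℙ s).toReal with hp_def
    have h8 : (0:ℝ) < a*p^2/8 := by positivity
    have := hPle (a*p^2/8) h8
    have hsq : Real.sqrt (2*(a*p^2/8)/a) = p/2 := by
      rw [show 2*(a*p^2/8)/a = (p/2)^2 by field_simp; ring]
      exact Real.sqrt_sq (by positivity)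
    rw [hsq] at this
    linarith
  have := (measure_eq_zero_iff_ae_notMem).mp hP0
  filter_upwards [this] with ω hω
  exact hω


theorem stmt_15 {Ω : Type*} [MeasurableSpace Ω] (ℙ : Measure Ω) [IsProbabilityMeasure ℙ]
    (a b c d : ℝ) (hD : a * d - c ^ 2 - b ^ 2 = 0) (ha : 0 < a)
    (X : Ω → (Fin 4 → ℝ)) (hX : Measurable X)
    (hchar : ∀ u : Fin 4 → ℝ,
      (∫ ω, Complex.exp (Complex.I * ((∑ j, u j * X ω j : ℝ) : ℂ)) ∂ℙ)
        = Complex.exp (-(1 / 2 : ℂ) *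
            ((dotProduct u
              ((!![a, b, 0, c; b, d, c, 0; 0, c, a, -b; c, 0, -b, d] :
                Matrix (Fin 4) (Fin 4) ℝ).mulVec u) : ℝ) : ℂ))) :
    ∀ᵐ ω ∂ℙ, 0 < X ω 0 ^ 2 + X ω 2 ^ 2 ∧
      (X ω 0 * X ω 1 - X ω 2 * X ω 3) / (X ω 0 ^ 2 + X ω 2 ^ 2) = b / a := by
  have hX0 : Measurable fun ω => X ω 0 := (measurable_pi_apply 0).comp hX
  have hX1 : Measurable fun ω => X ω 1 := (measurable_pi_apply 1).comp hX
  have hX2 : Measurable fun ω => X ω 2 := (measurable_pi_apply 2).comp hX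
  have hX3 : Measurable fun ω => X ω 3 := (measurable_pi_apply 3).comp hX
  -- first degenerate direction
  have hz1 : ∀ᵐ ω ∂ℙ, (-b) * X ω 0 + a * X ω 1 + (-c) * X ω 2 = 0 := by
    apply aux_zero ℙ _ (((hX0.const_mul _).add (hX1.const_mul _)).add (hX2.const_mul _))
    intro t
    have hsum : ∀ ω, (∑ j, (![t*(-b), t*a, t*(-c), 0] : Fin 4 → ℝ) j * X ω j)
        = t * ((-b) * X ω 0 + a * X ω 1 + (-c) * X ω 2) := by
      intro ω; simp [Fin.sum_univ_four]; ring
    have hdot : dotProduct ![t*(-b), t*a, t*(-c), 0]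
        ((!![a, b, 0, c; b, d, c, 0; 0, c, a, -b; c, 0, -b, d] :
          Matrix (Fin 4) (Fin 4) ℝ).mulVec ![t*(-b), t*a, t*(-c), 0]) = 0 := by
      simp [Matrix.mulVec, dotProduct, Fin.sum_univ_four]
      linear_combination (t^2 * a) * hD
    have := hchar ![t*(-b), t*a, t*(-c), 0]
    rw [hdot] at this
    simp only [hsum] at this
    simpa using this
  -- second degenerate direction
  have hz2 : ∀ᵐ ω ∂ℙ, (-c) * X ω 0 + b * X ω 2 + a * X ω 3 = 0 := by
    apply aux_zero ℙ _ (((hX0.const_mul _).add (hX2.const_mul _)).add (hX3.const_mul _))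
    intro t
    have hsum : ∀ ω, (∑ j, (![t*(-c), 0, t*b, t*a] : Fin 4 → ℝ) j * X ω j)
        = t * ((-c) * X ω 0 + b * X ω 2 + a * X ω 3) := by
      intro ω; simp [Fin.sum_univ_four]; ring
    have hdot : dotProduct ![t*(-c), 0, t*b, t*a]
        ((!![a, b, 0, c; b, d, c, 0; 0, c, a, -b; c, 0, -b, d] :
          Matrix (Fin 4) (Fin 4) ℝ).mulVec ![t*(-c), 0, t*b, t*a]) = 0 := by
      simp [Matrix.mulVec, dotProduct, Fin.sum_univ_four]
      linear_combination (t^2 * a) * hD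
    have := hchar ![t*(-c), 0, t*b, t*a]
    rw [hdot] at this
    simp only [hsum] at this
    simpa using this
  -- no atom at zero for the first coordinate
  have hat : ∀ᵐ ω ∂ℙ, X ω 0 ≠ 0 := by
    apply aux_atom ℙ _ hX0 a ha
    intro t
    have hsum : ∀ ω, (∑ j, (![t, 0, 0, 0] : Fin 4 → ℝ) j * X ω j) = t * X ω 0 := by
      intro ω; simp [Fin.sum_univ_four]
    have hdot : dotProduct ![t, 0, 0, 0]
        ((!![a, b, 0, c; b, d, c, 0; 0, c, a, -b; c, 0, -b, d] :
          Matrix (Fin 4) (Fin 4) ℝ).mulVec ![t, 0, 0, 0]) = a * t^2 := by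
      simp [Matrix.mulVec, dotProduct, Fin.sum_univ_four]
      ring
    have := hchar ![t, 0, 0, 0]
    rw [hdot] at this
    simp only [hsum] at this
    rw [this]
    congr 1
    push_cast
    ring
  filter_upwards [hz1, hz2, hat] with ω h1 h2 h3
  have hpos : 0 < X ω 0 ^ 2 + X ω 2 ^ 2 := by
    have h0 : 0 < X ω 0 ^ 2 := lt_of_le_of_ne (sq_nonneg _) (Ne.symm (pow_ne_zero 2 h3))
    nlinarith [sq_nonneg (X ω 2)]
  refine ⟨hpos, ?_⟩
  rw [div_eq_div_iff (ne_of_gt hpos) (ne_of_gt ha)]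
  linear_combination (X ω 0) * h1 - (X ω 2) * h2
end

section
/- Let (Ω, 𝓑, ℙ) be a probability space and let x, y : ℝ → L²(Ω; ℝ) be zero-mean real-valued processes that are jointly wide-sense stationary: there are functions ρ_x, ρ_{yx} : ℝ → ℝ with ρ_x twice continuously differentiable and ρ_{yx} continuously differentiable such that E[x(t)x(s)] = E[y(t)y(s)] = ρ_x(t−s) and E[y(t)x(s)] = ρ_{yx}(t−s) for all t, s ∈ ℝ, with ρ_x(0) > 0. Suppose y is mean-square differentiable with derivative ẏ(t) ∈ L²(Ω; ℝ) satisfying E[ẏ(t)·ẏ(s)] = −ρ_x''(t−s) and E[ẏ(t)·x(s)] = ρ_{yx}'(t−s) for all t, s ∈ ℝ. If −ρ_x(0)·ρ_x''(0) = (ρ_{yx}'(0))², then there exist α > 0 and β ≥ 0 with ρ_x(t) = α·cos(β·t) for all t ∈ ℝ; specifically α = ρ_x(0) and β = ( −ρ_x''(0)/ρ_x(0) )^{1/2}. -/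
open MeasureTheory

private lemma l2_mul_integrable' {Ω : Type*} [MeasurableSpace Ω] {ℙ : Measure Ω}
    {f g : Ω → ℝ} (hf : MemLp f 2 ℙ) (hg : MemLp g 2 ℙ) :
    Integrable (fun ω => f ω * g ω) ℙ := by
  have h : MemLp (f • g) 1 ℙ :=
    hg.smul hf
  exact memLp_one_iff_integrable.mp h

private lemma ode_cos' {f : ℝ → ℝ} {b : ℝ} (hf : ContDiff ℝ 2 f)
    (hode : ∀ t, deriv (deriv f) t = -(b ^ 2 * f t)) (hf'0 : deriv f 0 = 0) :
    ∀ t, f t = f 0 * Real.cos (b * t) := by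
  have hdf : Differentiable ℝ f := hf.differentiable (by norm_num)
  have hf2 : ContDiff ℝ (1 + 1) f := by norm_num; exact hf
  have hdf' : Differentiable ℝ (deriv f) :=
    ((contDiff_succ_iff_deriv.mp hf2).2.2).differentiable (by norm_num)
  set g : ℝ → ℝ := fun t => f t - f 0 * Real.cos (b * t) with hg_def
  set g1 : ℝ → ℝ := fun t => deriv f t + f 0 * b * Real.sin (b * t) with hg1_def
  have hbt : ∀ t : ℝ, HasDerivAt (fun u : ℝ => b * u) b t := by
    intro t
    simpa using (hasDerivAt_id t).const_mul b
  have hg : ∀ t, HasDerivAt g (g1 t) t := by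
    intro t
    have hc : HasDerivAt (fun u : ℝ => f 0 * Real.cos (b * u))
        (f 0 * (-Real.sin (b * t) * b)) t := ((hbt t).cos).const_mul (f 0)
    have := (hdf t).hasDerivAt.sub hc
    refine this.congr_deriv ?_
    simp [hg1_def]; ring
  have hg1 : ∀ t, HasDerivAt g1 (-(b ^ 2 * g t)) t := by
    intro t
    have hs : HasDerivAt (fun u : ℝ => f 0 * b * Real.sin (b * u))
        (f 0 * b * (Real.cos (b * t) * b)) t := ((hbt t).sin).const_mul (f 0 * b)
    have := (hdf' t).hasDerivAt.add hs
    refine this.congr_deriv ?_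
    rw [hode t]
    simp [hg_def]; ring
  set E : ℝ → ℝ := fun t => (g1 t) ^ 2 + b ^ 2 * (g t) ^ 2 with hE_def
  have hE : ∀ t, HasDerivAt E 0 t := by
    intro t
    have h := ((hg1 t).pow 2).add (((hg t).pow 2).const_mul (b ^ 2))
    refine h.congr_deriv ?_
    push_cast
    ring
  have hEconst : ∀ t, E t = E 0 :=
    fun t => is_const_of_deriv_eq_zero (fun u => (hE u).differentiableAt)
      (fun u => (hE u).deriv) t 0
  have hg0 : g 0 = 0 := by simp [hg_def]
  have hg10 : g1 0 = 0 := by simp [hg1_def, hf'0]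
  have hE0 : E 0 = 0 := by simp [hE_def, hg0, hg10]
  have hg1z : ∀ t, g1 t = 0 := by
    intro t
    have h := hEconst t
    rw [hE0] at h
    simp only [hE_def] at h
    have h1 : g1 t ^ 2 = 0 := by
      nlinarith [sq_nonneg (g1 t), mul_nonneg (sq_nonneg b) (sq_nonneg (g t))]
    exact (pow_eq_zero_iff two_ne_zero).mp h1
  have hgz : ∀ t, g t = 0 := by
    intro t
    have := is_const_of_deriv_eq_zero (f := g)
      (fun u => (hg u).differentiableAt)
      (fun u => by rw [(hg u).deriv, hg1z u]) t 0
    rw [this, hg0]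
  intro t
  have := hgz t
  simp only [hg_def] at this
  linarith

theorem stmt_19 {Ω : Type*} [MeasurableSpace Ω] (ℙ : Measure Ω) [IsProbabilityMeasure ℙ]
    (x y ydot : ℝ → Ω → ℝ) (ρx ρyx : ℝ → ℝ)
    (hx2 : ∀ t : ℝ, MemLp (x t) 2 ℙ) (hy2 : ∀ t : ℝ, MemLp (y t) 2 ℙ)
    (hxm : ∀ t : ℝ, (∫ ω, x t ω ∂ℙ) = 0) (hym : ∀ t : ℝ, (∫ ω, y t ω ∂ℙ) = 0)
    (hρx : ContDiff ℝ 2 ρx) (hρyx : ContDiff ℝ 1 ρyx)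
    (hcovx : ∀ t s : ℝ, (∫ ω, x t ω * x s ω ∂ℙ) = ρx (t - s))
    (hcovy : ∀ t s : ℝ, (∫ ω, y t ω * y s ω ∂ℙ) = ρx (t - s))
    (hcovyx : ∀ t s : ℝ, (∫ ω, y t ω * x s ω ∂ℙ) = ρyx (t - s))
    (hρx0 : 0 < ρx 0)
    (hydot2 : ∀ t : ℝ, MemLp (ydot t) 2 ℙ)
    (hmsdiff : ∀ t : ℝ, Filter.Tendsto
      (fun ε : ℝ => ∫ ω, ((y (t + ε) ω - y t ω) / ε - ydot t ω) ^ 2 ∂ℙ)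
      (nhdsWithin 0 {(0 : ℝ)}ᶜ) (nhds 0))
    (hdd : ∀ t s : ℝ, (∫ ω, ydot t ω * ydot s ω ∂ℙ) = -(deriv (deriv ρx) (t - s)))
    (hdx : ∀ t s : ℝ, (∫ ω, ydot t ω * x s ω ∂ℙ) = deriv ρyx (t - s))
    (hkey : -(ρx 0 * deriv (deriv ρx) 0) = (deriv ρyx 0) ^ 2) :
    ∃ α β : ℝ, 0 < α ∧ 0 ≤ β ∧ (∀ t : ℝ, ρx t = α * Real.cos (β * t)) ∧
      α = ρx 0 ∧ β = Real.sqrt (-(deriv (deriv ρx) 0) / ρx 0) := by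
  have ha : ρx 0 ≠ 0 := ne_of_gt hρx0
  set a : ℝ := ρx 0 with ha_def
  set d : ℝ := deriv ρyx 0 with hd_def
  set lam : ℝ := d / a with hlam_def
  -- evenness of ρx
  have ρeven : ∀ u : ℝ, ρx (-u) = ρx u := by
    intro u
    have h1 := hcovx u 0
    have h2 := hcovx 0 u
    rw [sub_zero] at h1
    rw [zero_sub] at h2
    rw [← h1, ← h2]
    exact integral_congr_ae (Filter.Eventually.of_forall fun ω => mul_comm _ _)
  -- deriv ρx 0 = 0
  have hdρ : Differentiable ℝ ρx := hρx.differentiable (by norm_num)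
  have hderiv0 : deriv ρx 0 = 0 := by
    have hneg : HasDerivAt (fun u : ℝ => -u) (-1 : ℝ) 0 := (hasDerivAt_id 0).neg
    have hcomp : HasDerivAt (fun u : ℝ => ρx (-u)) (deriv ρx (-0) * (-1)) 0 :=
      HasDerivAt.comp 0 ((hdρ (-0)).hasDerivAt) hneg
    have heq : (fun u : ℝ => ρx (-u)) = ρx := funext ρeven
    rw [heq, neg_zero] at hcomp
    have := (hdρ 0).hasDerivAt.unique hcomp
    linarith
  -- a.e. equality ydot t = lam * x t
  have hae : ∀ t : ℝ, (ydot t) =ᵐ[ℙ] (fun ω => lam * x t ω) := by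
    intro t
    set Z : Ω → ℝ := fun ω => ydot t ω - lam * x t ω with hZ_def
    have hZ2 : MemLp Z 2 ℙ := (hydot2 t).sub ((hx2 t).const_mul lam)
    have hZint : Integrable (fun ω => Z ω * Z ω) ℙ := l2_mul_integrable' hZ2 hZ2
    have Iyy := l2_mul_integrable' (hydot2 t) (hydot2 t)
    have Iyx := l2_mul_integrable' (hydot2 t) (hx2 t)
    have Ixx := l2_mul_integrable' (hx2 t) (hx2 t)
    have hexp : (fun ω => Z ω * Z ω) = fun ω =>
        (ydot t ω * ydot t ω - (2 * lam) * (ydot t ω * x t ω))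
          + lam ^ 2 * (x t ω * x t ω) := by
      funext ω; simp only [hZ_def]; ring
    have I1 : Integrable (fun ω => 2 * lam * (ydot t ω * x t ω)) ℙ := Iyx.const_mul _
    have I2 : Integrable (fun ω => lam ^ 2 * (x t ω * x t ω)) ℙ := Ixx.const_mul _
    have I3 : Integrable
        (fun ω => ydot t ω * ydot t ω - 2 * lam * (ydot t ω * x t ω)) ℙ := Iyy.sub I1
    have hint0 : ∫ ω, Z ω * Z ω ∂ℙ = 0 := by
      rw [hexp, integral_add I3 I2, integral_sub Iyy I1, integral_const_mul,
        integral_const_mul, hdd t t, hdx t t, hcovx t t, sub_self]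
      have hdd0 : -(deriv (deriv ρx) 0) = d ^ 2 / a := by
        field_simp
        linear_combination hkey
      rw [hdd0, hlam_def]
      field_simp
      ring
    have hZsq0 : (fun ω => Z ω * Z ω) =ᵐ[ℙ] 0 :=
      (integral_eq_zero_iff_of_nonneg (fun ω => mul_self_nonneg (Z ω)) hZint).mp hint0
    filter_upwards [hZsq0] with ω hω
    have : Z ω = 0 := by
      have := mul_self_eq_zero.mp hω
      exact this
    have h2 : ydot t ω - lam * x t ω = 0 := this
    linarith
  -- deriv ρyx u = lam * ρx u
  have hC : ∀ u : ℝ, deriv ρyx u = lam * ρx u := by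
    intro u
    have h1 := hdx u 0
    rw [sub_zero] at h1
    rw [← h1]
    have : (∫ ω, ydot u ω * x 0 ω ∂ℙ) = ∫ ω, lam * (x u ω * x 0 ω) ∂ℙ := by
      apply integral_congr_ae
      filter_upwards [hae u] with ω hω
      rw [hω]; ring
    rw [this, integral_const_mul, hcovx u 0, sub_zero]
  -- deriv (deriv ρx) u = -(lam^2 * ρx u)
  have hD : ∀ u : ℝ, deriv (deriv ρx) u = -(lam ^ 2 * ρx u) := by
    intro u
    have h1 := hdd u 0
    rw [sub_zero] at h1
    have h2 : (∫ ω, ydot u ω * ydot 0 ω ∂ℙ) = ∫ ω, lam * (ydot 0 ω * x u ω) ∂ℙ := by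
      apply integral_congr_ae
      filter_upwards [hae u] with ω hω
      rw [hω]; ring
    rw [h2, integral_const_mul, hdx 0 u, zero_sub, hC (-u), ρeven u] at h1
    linear_combination h1
  -- pick β
  set β : ℝ := Real.sqrt (-(deriv (deriv ρx) 0) / ρx 0) with hβ_def
  have hdd0 : deriv (deriv ρx) 0 = -(lam ^ 2 * a) := hD 0
  have harg : -(deriv (deriv ρx) 0) / ρx 0 = lam ^ 2 := by
    rw [hdd0]
    field_simp
    exact mul_div_cancel_right₀ _ ha
  have hβsq : β ^ 2 = lam ^ 2 := by
    rw [hβ_def, harg]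
    exact Real.sq_sqrt (sq_nonneg lam)
  have hode : ∀ t, deriv (deriv ρx) t = -(β ^ 2 * ρx t) := by
    intro t; rw [hβsq]; exact hD t
  have hsol := ode_cos' hρx hode hderiv0
  exact ⟨ρx 0, β, hρx0, Real.sqrt_nonneg _, hsol, rfl, rfl⟩
end
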